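/- arXiv:1003.0963 — 4 statements merged into one kernel-verified Lean document; each statement's English description precedes it below -/
import Mathlib

section
/- Let G be a locally compact, totally disconnected local group. Then some restriction G|U of G is a compact topological group; that is, there is a compact symmetric open neighborhood U of 1 in G with U×U ⊆ Ω and xy ∈ U for all x,y ∈ U, so that U with the induced operations is a compact topological group. -/
open scoped Topology

universe u v

section LocalGroupBasics

variable {G : Type u} {G' : Type v}

/-- A subset `X` of `G` is *symmetric* if `X = X⁻¹`, i.e. membership in `X` is
invariant under the inversion map. -/
def IsSymmetricSet (inv : G → G) (X : Set G) : Prop := ∀ x, x ∈ X ↔ inv x ∈ X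

/-- The data `(one, inv, dom, mul)` on a topological space `G` is a *local group*:
`G` is Hausdorff, `dom ⊆ G × G` is open, inversion is continuous, multiplication is
continuous on `dom`, and the identity, inverse and (local) associativity axioms hold.
(Here `mul` is a total function, but its values outside `dom` are irrelevant:
all axioms refer only to products taken inside `dom`.) -/
structure IsLocalGroup [TopologicalSpace G] (one : G) (inv : G → G)
    (dom : Set (G × G)) (mul : G → G → G) : Prop where
  t2 : T2Space G
  isOpen_dom : IsOpen dom
  continuous_inv : Continuous inv
  continuousOn_mul : ContinuousOn (fun p : G × G => mul p.1 p.2) dom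
  mem_one_left : ∀ x : G, (one, x) ∈ dom
  mem_one_right : ∀ x : G, (x, one) ∈ dom
  one_mul : ∀ x : G, mul one x = x
  mul_one : ∀ x : G, mul x one = x
  mem_inv_left : ∀ x : G, (inv x, x) ∈ dom
  mem_inv_right : ∀ x : G, (x, inv x) ∈ dom
  inv_mul : ∀ x : G, mul (inv x) x = one
  mul_inv : ∀ x : G, mul x (inv x) = one
  assoc : ∀ x y z : G, (x, y) ∈ dom → (y, z) ∈ dom →
    ((mul x y, z) ∈ dom ∨ (x, mul y z) ∈ dom) →
    (mul x y, z) ∈ dom ∧ (x, mul y z) ∈ dom ∧ mul (mul x y) z = mul x (mul y z)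

/-- `abc` is defined: `(a,b) ∈ Ω`, `(b,c) ∈ Ω` and `(ab,c) ∈ Ω`. -/
def TripleDefined (dom : Set (G × G)) (mul : G → G → G) (a b c : G) : Prop :=
  (a, b) ∈ dom ∧ (b, c) ∈ dom ∧ (mul a b, c) ∈ dom

/-- A *subgroup* of the local group: a symmetric subset `H` with `1 ∈ H`,
`H × H ⊆ Ω` and `xy ∈ H` for all `x, y ∈ H`. -/
def IsLGSubgroup (one : G) (inv : G → G) (dom : Set (G × G)) (mul : G → G → G)
    (H : Set G) : Prop :=
  IsSymmetricSet inv H ∧ one ∈ H ∧ ∀ x ∈ H, ∀ y ∈ H, (x, y) ∈ dom ∧ mul x y ∈ H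

/-- A *normal subgroup* of the local group: a subgroup `N` such that for all `x ∈ N`
and all `a ∈ G`, `a * x * a⁻¹` is defined and lies in `N`. -/
def IsLGNormalSubgroup (one : G) (inv : G → G) (dom : Set (G × G)) (mul : G → G → G)
    (N : Set G) : Prop :=
  IsLGSubgroup one inv dom mul N ∧
    ∀ x ∈ N, ∀ a : G, TripleDefined dom mul a x (inv a) ∧ mul (mul a x) (inv a) ∈ N

/-- A *morphism* of local groups: a continuous map `φ` such that whenever
`(x,y) ∈ Ω_G`, also `(φ x, φ y) ∈ Ω_{G'}` and `φ(xy) = φ(x)φ(y)`. -/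
def IsLGHom [TopologicalSpace G] [TopologicalSpace G'] (dom : Set (G × G))
    (mul : G → G → G) (dom' : Set (G' × G')) (mul' : G' → G' → G') (φ : G → G') : Prop :=
  Continuous φ ∧
    ∀ x y : G, (x, y) ∈ dom → (φ x, φ y) ∈ dom' ∧ φ (mul x y) = mul' (φ x) (φ y)

/-- A morphism is *strong* if `(φ x, φ y) ∈ Ω_{G'}` implies `(x, y) ∈ Ω_G`. -/
def IsStrong (dom : Set (G × G)) (dom' : Set (G' × G')) (φ : G → G') : Prop :=
  ∀ x y : G, (φ x, φ y) ∈ dom' → (x, y) ∈ dom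

/-- An *isomorphism* of local groups: a morphism with a two-sided inverse that is
also a morphism. -/
def IsLGIso [TopologicalSpace G] [TopologicalSpace G'] (dom : Set (G × G))
    (mul : G → G → G) (dom' : Set (G' × G')) (mul' : G' → G' → G') (φ : G → G') : Prop :=
  IsLGHom dom mul dom' mul' φ ∧
    ∃ ψ : G' → G, IsLGHom dom' mul' dom mul ψ ∧
      Function.LeftInverse ψ φ ∧ Function.RightInverse ψ φ

/-- A map `ι : G → G'` is *open onto its image* if the image of every open set
is open in the subspace `ι(G)` of `G'`. -/
def IsOpenOntoImage [TopologicalSpace G] [TopologicalSpace G'] (ι : G → G') : Prop :=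
  ∀ O : Set G, IsOpen O → ∃ O' : Set G', IsOpen O' ∧ O' ∩ Set.range ι = ι '' O

end LocalGroupBasics

section Restriction

variable {G : Type u}

/-- The identity of the restriction `G|U`. -/
def restrictOne (one : G) (U : Set G) (h : one ∈ U) : ↥U := ⟨one, h⟩

open Classical in
/-- The inversion of the restriction `G|U` (with an irrelevant junk value on
points whose inverse falls outside `U`; when `U` is symmetric this never happens). -/
noncomputable def restrictInv (inv : G → G) (U : Set G) : ↥U → ↥U := fun x =>
  if h : inv ↑x ∈ U then ⟨inv ↑x, h⟩ else x

/-- The domain `Ω_U = {(x,y) ∈ Ω ∩ (U × U) : xy ∈ U}` of the restriction `G|U`. -/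
def restrictDom (dom : Set (G × G)) (mul : G → G → G) (U : Set G) : Set (↥U × ↥U) :=
  {p | ((p.1 : G), (p.2 : G)) ∈ dom ∧ mul ↑p.1 ↑p.2 ∈ U}

open Classical in
/-- The product of the restriction `G|U` (with an irrelevant junk value outside
`Ω_U`). -/
noncomputable def restrictMul (mul : G → G → G) (U : Set G) : ↥U → ↥U → ↥U := fun x y =>
  if h : mul ↑x ↑y ∈ U then ⟨mul ↑x ↑y, h⟩ else x

end Restriction

section Cosets

variable {G : Type u}

/-- The left coset `aN`. -/
def lCoset (mul : G → G → G) (N : Set G) (a : G) : Set G := {y | ∃ x ∈ N, y = mul a x}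

/-- The right coset `Na`. -/
def rCoset (mul : G → G → G) (N : Set G) (a : G) : Set G := {y | ∃ x ∈ N, y = mul x a}

/-- The underlying set `{aN : a ∈ G}` of the quotient `G/N`. -/
def Cosets (mul : G → G → G) (N : Set G) : Type u :=
  {A : Set G // ∃ a : G, A = lCoset mul N a}

/-- The canonical map `π : G → G/N`, `π(a) = aN`. -/
def cosetMap (mul : G → G → G) (N : Set G) (a : G) : Cosets mul N :=
  ⟨lCoset mul N a, a, rfl⟩

/-- The quotient topology on `G/N`. -/
def cosetTop [t : TopologicalSpace G] (mul : G → G → G) (N : Set G) :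
    TopologicalSpace (Cosets mul N) :=
  t.coinduced (cosetMap mul N)

/-- The domain `Ω_{G/N} = {(aN, bN) : (a,b) ∈ Ω}` of the quotient `G/N`. -/
def cosetDom (dom : Set (G × G)) (mul : G → G → G) (N : Set G) :
    Set (Cosets mul N × Cosets mul N) :=
  {p | ∃ a b : G, (a, b) ∈ dom ∧ p = (cosetMap mul N a, cosetMap mul N b)}

end Cosets

section NSS

/-- A local group has *no small subgroups* (NSS) if some neighborhood of the
identity contains no subgroup other than `{1}`. (The topology is an explicit
argument, so that this can be applied to quotient topologies.) -/
def HasNSS {G : Type u} (t : TopologicalSpace G) (one : G) (inv : G → G)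
    (dom : Set (G × G)) (mul : G → G → G) : Prop :=
  ∃ W ∈ @nhds G t one, ∀ K : Set G, IsLGSubgroup one inv dom mul K → K ⊆ W → K = {one}

end NSS

section TopGroup

/-- `H`, with a given group structure and topology, is a topological group whose
operations are compatible with the ambient local group data on `G ⊇ H`. -/
def GroupStructureCompatible {G : Type u} [TopologicalSpace G] (one : G) (inv : G → G)
    (mul : G → G → G) (H : Set G) [Group ↥H] : Prop :=
  (((1 : ↥H) : G) = one) ∧ (∀ a b : ↥H, ((a * b : ↥H) : G) = mul ↑a ↑b) ∧
    (∀ a : ↥H, ((a⁻¹ : ↥H) : G) = inv ↑a) ∧ IsTopologicalGroup ↥H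

/-- The restriction `G|U` is isomorphic, as a local group, to the restriction `H|V`
of the (Hausdorff) topological group `H` to some symmetric open neighborhood `V` of
its identity. -/
def IsoToGroupRestriction {G : Type u} [TopologicalSpace G]
    (dom : Set (G × G)) (mul : G → G → G) (U : Set G)
    (H : Type u) [TopologicalSpace H] [Group H] : Prop :=
  IsTopologicalGroup H ∧ T2Space H ∧
    ∃ V : Set H, IsOpen V ∧ (1 : H) ∈ V ∧ IsSymmetricSet (fun h => h⁻¹) V ∧
      ∃ φ : ↥U → ↥V,
        IsLGIso (restrictDom dom mul U) (restrictMul mul U)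
          (restrictDom Set.univ (fun a b : H => a * b) V)
          (restrictMul (fun a b : H => a * b) V) φ

/-- The local group `(G, one, inv, dom, mul)` is *locally isomorphic to a
topological group*: some restriction of it is isomorphic, as a local group, to a
restriction of a (Hausdorff) topological group. -/
def LocallyIsoToTopGroup {G : Type u} [TopologicalSpace G] (one : G) (inv : G → G)
    (dom : Set (G × G)) (mul : G → G → G) : Prop :=
  ∃ U : Set G, IsOpen U ∧ one ∈ U ∧ IsSymmetricSet inv U ∧
    ∃ (H : Type u) (tH : TopologicalSpace H) (gH : Group H),
      @IsoToGroupRestriction G _ dom mul U H tH gH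

end TopGroup



section VanDantzigAux

variable {G : Type u} [TopologicalSpace G] {one : G} {inv : G → G}
  {dom : Set (G × G)} {mul : G → G → G}

/-- Uniqueness of inverses in a local group. -/
theorem LG.inv_eq (hG : IsLocalGroup one inv dom mul) {a b : G}
    (hd : (a, b) ∈ dom) (h : mul a b = one) : b = inv a := by
  obtain ⟨-, -, h3⟩ := hG.assoc (inv a) a b (hG.mem_inv_left a) hd
    (Or.inl (by rw [hG.inv_mul]; exact hG.mem_one_left b))
  rw [hG.inv_mul, hG.one_mul, h, hG.mul_one] at h3
  exact h3

theorem LG.inv_inv (hG : IsLocalGroup one inv dom mul) (x : G) :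
    inv (inv x) = x :=
  (LG.inv_eq hG (hG.mem_inv_left x) (hG.inv_mul x)).symm

theorem LG.inv_one (hG : IsLocalGroup one inv dom mul) : inv one = one :=
  (LG.inv_eq hG (hG.mem_one_left one) (hG.one_mul one)).symm

/-- Inverse of a product. -/
theorem LG.mul_inv_rev (hG : IsLocalGroup one inv dom mul) {a b : G}
    (hd1 : (a, b) ∈ dom) (hd2 : (inv b, inv a) ∈ dom) :
    inv (mul a b) = mul (inv b) (inv a) := by
  obtain ⟨hA, -, e1⟩ := hG.assoc a b (inv b) hd1 (hG.mem_inv_right b)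
    (Or.inr (by rw [hG.mul_inv]; exact hG.mem_one_right a))
  rw [hG.mul_inv, hG.mul_one] at e1
  obtain ⟨-, hB, e2⟩ := hG.assoc (mul a b) (inv b) (inv a) hA hd2
    (Or.inl (by rw [e1]; exact hG.mem_inv_right a))
  rw [e1, hG.mul_inv] at e2
  exact (LG.inv_eq hG hB e2.symm).symm

/-- Cancellation: `u * (u⁻¹ * y) = y`. -/
theorem LG.cancel (hG : IsLocalGroup one inv dom mul) {u y : G}
    (hd : (inv u, y) ∈ dom) :
    (u, mul (inv u) y) ∈ dom ∧ mul u (mul (inv u) y) = y := by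
  obtain ⟨-, hB, e⟩ := hG.assoc u (inv u) y (hG.mem_inv_right u) hd
    (Or.inl (by rw [hG.mul_inv]; exact hG.mem_one_left y))
  rw [hG.mul_inv, hG.one_mul] at e
  exact ⟨hB, e.symm⟩

/-- The set of elements generated from `one` and `V` by right multiplication
with elements of `V` and inversion. -/
inductive LGGen (one : G) (inv : G → G) (mul : G → G → G) (V : Set G) : G → Prop
  | base : LGGen one inv mul V one
  | mulV {x v : G} : LGGen one inv mul V x → v ∈ V → LGGen one inv mul V (mul x v)
  | invStep {x : G} : LGGen one inv mul V x → LGGen one inv mul V (inv x)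

end VanDantzigAux

/-- Proposition 1.2. If `G` is a locally compact, totally
disconnected local group, then some restriction of `G` is a compact topological
group: there is a compact symmetric open neighborhood `U` of `1` with
`U × U ⊆ Ω` and `xy ∈ U` for all `x, y ∈ U`, and `U` with the induced operations
is a compact topological group. -/
theorem restriction_compact_group_of_totallyDisconnected
    {G : Type u} [TopologicalSpace G] (one : G) (inv : G → G)
    (dom : Set (G × G)) (mul : G → G → G)
    (hG : IsLocalGroup one inv dom mul) (hLC : LocallyCompactSpace G)
    (htd : TotallyDisconnectedSpace G) :
    ∃ U : Set G, IsCompact U ∧ IsOpen U ∧ one ∈ U ∧ IsSymmetricSet inv U ∧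
      (∀ x ∈ U, ∀ y ∈ U, (x, y) ∈ dom ∧ mul x y ∈ U) ∧
      ∃ gU : Group ↥U, @GroupStructureCompatible G _ one inv mul U gU := by
  classical
  haveI := hG.t2
  -- an open set `O ∋ one` with `O ×ˢ O ⊆ dom`
  obtain ⟨O, hO1, hOopen, hOdom⟩ : ∃ O : Set G, one ∈ O ∧ IsOpen O ∧ O ×ˢ O ⊆ dom := by
    rcases isOpen_prod_iff.1 hG.isOpen_dom one one (hG.mem_one_left one) with
      ⟨A, B, hA, hB, hA1, hB1, hAB⟩
    exact ⟨A ∩ B, ⟨hA1, hB1⟩, hA.inter hB, fun p hp => hAB ⟨hp.1.1, hp.2.2⟩⟩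
  -- a compact open neighborhood `C0` of `one` inside `O`
  obtain ⟨K, hKcomp, hK1, hKO⟩ := exists_compact_subset hOopen hO1
  obtain ⟨C0, hC0clopen, hC01, hC0K⟩ :
      ∃ C0 : Set G, IsClopen C0 ∧ one ∈ C0 ∧ C0 ⊆ interior K := by
    rcases loc_compact_Haus_tot_disc_of_zero_dim.mem_nhds_iff.1
      (isOpen_interior.mem_nhds hK1) with ⟨C0, hcl, h1, hsub⟩
    exact ⟨C0, hcl, h1, hsub⟩
  have hC0comp : IsCompact C0 :=
    hKcomp.of_isClosed_subset hC0clopen.1 (hC0K.trans interior_subset)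
  have hC0O : C0 ⊆ O := (hC0K.trans interior_subset).trans hKO
  -- symmetrize: `C := C0 ∩ inv ⁻¹' C0`
  set C : Set G := C0 ∩ inv ⁻¹' C0 with hCdef
  have hCopen : IsOpen C := hC0clopen.2.inter (hC0clopen.2.preimage hG.continuous_inv)
  have hCcomp : IsCompact C :=
    hC0comp.inter_right (hC0comp.isClosed.preimage hG.continuous_inv)
  have hC1 : one ∈ C := ⟨hC01, by simpa [LG.inv_one hG] using hC01⟩
  have hCsym : ∀ x ∈ C, inv x ∈ C := fun x hx =>
    ⟨hx.2, by simpa [LG.inv_inv hG] using hx.1⟩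
  have hCdom : ∀ x ∈ C, ∀ y ∈ C, (x, y) ∈ dom := fun x hx y hy =>
    hOdom ⟨hC0O hx.1, hC0O hy.1⟩
  -- the open set `D = {p ∈ dom | mul p.1 p.2 ∈ C}`
  set D : Set (G × G) := dom ∩ (fun p : G × G => mul p.1 p.2) ⁻¹' C with hDdef
  have hDopen : IsOpen D :=
    hG.continuousOn_mul.isOpen_inter_preimage hG.isOpen_dom hCopen
  -- neighborhoods witnessing continuity at `(c, one)` and `(one, c)`
  have hF : ∀ c ∈ C, ∃ E W : Set G, IsOpen E ∧ IsOpen W ∧ c ∈ E ∧ one ∈ W ∧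
      ∀ x ∈ E, ∀ w ∈ W, mul x w ∈ C ∧ mul w x ∈ C := by
    intro c hc
    have h1 : (c, one) ∈ D :=
      ⟨hG.mem_one_right c, by simpa [hG.mul_one] using hc⟩
    have h2 : (one, c) ∈ D :=
      ⟨hG.mem_one_left c, by simpa [hG.one_mul] using hc⟩
    rcases isOpen_prod_iff.1 hDopen c one h1 with ⟨A, B, hA, hB, hcA, h1B, hABD⟩
    rcases isOpen_prod_iff.1 hDopen one c h2 with ⟨B', A', hB', hA', h1B', hcA', hBAD⟩
    refine ⟨A ∩ A', B ∩ B', hA.inter hA', hB.inter hB', ⟨hcA, hcA'⟩, ⟨h1B, h1B'⟩,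
      fun x hx w hw => ⟨(hABD (Set.mk_mem_prod hx.1 hw.1)).2,
        (hBAD (Set.mk_mem_prod hw.2 hx.2)).2⟩⟩
  choose E W hEopen hWopen hcE h1W hEW using hF
  obtain ⟨t, ht⟩ := hCcomp.elim_nhds_subcover' (fun c hc => E c hc)
    (fun c hc => (hEopen c hc).mem_nhds (hcE c hc))
  -- `W0`: a small open neighborhood of `one` with `C·W0 ⊆ C` and `W0·C ⊆ C`
  set W0 : Set G := C ∩ ⋂ c ∈ t, W c c.2 with hW0def
  have hW0open : IsOpen W0 :=
    hCopen.inter (isOpen_biInter_finset fun c _ => hWopen c c.2)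
  have h1W0 : one ∈ W0 :=
    ⟨hC1, Set.mem_biInter fun c _ => h1W c c.2⟩
  have hW0C : W0 ⊆ C := Set.inter_subset_left
  have hW0mul : ∀ x ∈ C, ∀ w ∈ W0, mul x w ∈ C ∧ mul w x ∈ C := by
    intro x hx w hw
    rcases Set.mem_iUnion₂.1 (ht hx) with ⟨c, hct, hxE⟩
    exact hEW c c.2 x hxE w (Set.mem_iInter₂.1 hw.2 c hct)
  -- `V`: symmetric version of `W0`
  set V : Set G := W0 ∩ inv ⁻¹' W0 with hVdef
  have hVopen : IsOpen V := hW0open.inter (hW0open.preimage hG.continuous_inv)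
  have h1V : one ∈ V := ⟨h1W0, by simpa [LG.inv_one hG] using h1W0⟩
  have hVsym : ∀ v ∈ V, inv v ∈ V := fun v hv =>
    ⟨hv.2, by simpa [LG.inv_inv hG] using hv.1⟩
  have hVC : V ⊆ C := fun v hv => hW0C hv.1
  have hCV : ∀ x ∈ C, ∀ v ∈ V, mul x v ∈ C ∧ mul v x ∈ C := fun x hx v hv =>
    hW0mul x hx v hv.1
  -- the generated subgroup `U`
  set U : Set G := {x | LGGen one inv mul V x} with hUdef
  have hUC : U ⊆ C := by
    intro x hx
    induction hx with
    | base => exact hC1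
    | mulV hx hv ih => exact (hCV _ ih _ hv).1
    | invStep hx ih => exact hCsym _ ih
  have hVU : V ⊆ U := by
    intro v hv
    have h := LGGen.mulV (LGGen.base : LGGen one inv mul V one) hv
    rwa [hG.one_mul] at h
  have assocC : ∀ {a b c : G}, a ∈ C → b ∈ C → c ∈ C →
      (mul a b ∈ C ∨ mul b c ∈ C) → mul (mul a b) c = mul a (mul b c) := by
    intro a b c ha hb hc hor
    refine (hG.assoc a b c (hCdom a ha b hb) (hCdom b hb c hc) ?_).2.2
    rcases hor with h | h
    · exact Or.inl (hCdom _ h _ hc)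
    · exact Or.inr (hCdom _ ha _ h)
  -- left multiplication by elements of `V` stays in `U`
  have hL : ∀ x, x ∈ U → ∀ v ∈ V, mul v x ∈ U := by
    intro x hx
    induction hx with
    | base =>
      intro v hv
      have h' : v ∈ U := hVU hv
      rwa [← hG.mul_one v] at h'
    | @mulV x w hx hw ih =>
      intro v hv
      have e : mul (mul v x) w = mul v (mul x w) :=
        assocC (hVC hv) (hUC hx) (hVC hw) (Or.inl (hUC (ih v hv)))
      have h' : mul (mul v x) w ∈ U := LGGen.mulV (ih v hv) hw
      rwa [e] at h'
    | @invStep x hx ih =>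
      intro v hv
      have e : inv (mul x (inv v)) = mul v (inv x) := by
        rw [LG.mul_inv_rev hG (hCdom _ (hUC hx) _ (hVC (hVsym v hv)))
          (hCdom _ (by rw [LG.inv_inv hG]; exact hVC hv) _ (hCsym _ (hUC hx))),
          LG.inv_inv hG]
      have h' : inv (mul x (inv v)) ∈ U := LGGen.invStep (LGGen.mulV hx (hVsym v hv))
      rwa [e] at h'
  -- `U` is closed under products
  have hM : ∀ z, z ∈ U → ∀ x, x ∈ U → mul x z ∈ U ∧ mul z x ∈ U := by
    intro z hz
    induction hz with
    | base =>
      intro x hx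
      constructor
      · have h' : x ∈ U := hx
        rwa [← hG.mul_one x] at h'
      · have h' : x ∈ U := hx
        rwa [← hG.one_mul x] at h'
    | @mulV z v hz hv ih =>
      intro x hx
      constructor
      · have e : mul (mul x z) v = mul x (mul z v) :=
          assocC (hUC hx) (hUC hz) (hVC hv) (Or.inl (hUC (ih x hx).1))
        have h' : mul (mul x z) v ∈ U := LGGen.mulV (ih x hx).1 hv
        rwa [e] at h'
      · have hvx : mul v x ∈ U := hL x hx v hv
        have e : mul (mul z v) x = mul z (mul v x) :=
          assocC (hUC hz) (hVC hv) (hUC hx) (Or.inr (hUC hvx))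
        have h' : mul z (mul v x) ∈ U := (ih _ hvx).2
        rwa [← e] at h'
    | @invStep z hz ih =>
      intro x hx
      have hxinv : inv x ∈ U := LGGen.invStep hx
      constructor
      · have e : inv (mul z (inv x)) = mul x (inv z) := by
          rw [LG.mul_inv_rev hG (hCdom _ (hUC hz) _ (hCsym _ (hUC hx)))
            (hCdom _ (by rw [LG.inv_inv hG]; exact hUC hx) _ (hCsym _ (hUC hz))),
            LG.inv_inv hG]
        have h' : inv (mul z (inv x)) ∈ U := LGGen.invStep (ih _ hxinv).2
        rwa [e] at h'
      · have e : inv (mul (inv x) z) = mul (inv z) x := by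
          rw [LG.mul_inv_rev hG (hCdom _ (hCsym _ (hUC hx)) _ (hUC hz))
            (hCdom _ (hCsym _ (hUC hz)) _ (by rw [LG.inv_inv hG]; exact hUC hx)),
            LG.inv_inv hG]
        have h' : inv (mul (inv x) z) ∈ U := LGGen.invStep (ih _ hxinv).1
        rwa [e] at h'
  -- the neighborhoods `N u = C ∩ {y | (u⁻¹, y) ∈ dom ∧ u⁻¹ y ∈ V}`
  set DV : Set (G × G) := dom ∩ (fun p : G × G => mul p.1 p.2) ⁻¹' V with hDVdef
  have hDVopen : IsOpen DV :=
    hG.continuousOn_mul.isOpen_inter_preimage hG.isOpen_dom hVopen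
  have hNopen : ∀ u : G, IsOpen (C ∩ (fun y => (inv u, y)) ⁻¹' DV) := by
    intro u
    exact hCopen.inter (hDVopen.preimage (Continuous.prodMk_right (inv u)))
  have hNmem : ∀ u ∈ C, u ∈ C ∩ (fun y => (inv u, y)) ⁻¹' DV := by
    intro u hu
    exact ⟨hu, hG.mem_inv_left u, by rw [Set.mem_preimage]; simpa [hG.inv_mul] using h1V⟩
  have hNsub : ∀ u ∈ U, (C ∩ (fun y => (inv u, y)) ⁻¹' DV) ⊆ U := by
    intro u hu y hy
    obtain ⟨hyC, hydom, hyV⟩ := hy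
    have hc := LG.cancel hG (u := u) (y := y) hydom
    have : mul u (mul (inv u) y) ∈ U := (hM _ (hVU hyV) u hu).1
    rwa [hc.2] at this
  -- `U` is open
  have hUopen : IsOpen U := by
    rw [isOpen_iff_mem_nhds]
    intro u hu
    exact Filter.mem_of_superset
      ((hNopen u).mem_nhds (hNmem u (hUC hu))) (hNsub u hu)
  -- `U` is closed
  have hUclosed : IsClosed U := by
    rw [← isOpen_compl_iff, isOpen_iff_mem_nhds]
    intro c hc
    by_cases hcC : c ∈ C
    · refine Filter.mem_of_superset ((hNopen c).mem_nhds (hNmem c hcC)) ?_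
      intro y hy hyU
      obtain ⟨hyC, hydom, hyV⟩ := hy
      -- then `c = y * (c⁻¹ y)⁻¹ ∈ U`, contradiction
      set w : G := mul (inv c) y with hwdef
      have hwV : w ∈ V := hyV
      have hcw := LG.cancel hG (u := c) (y := y) hydom
      have e1 : mul c w = y := hcw.2
      have e2 : mul (mul c w) (inv w) = mul c (mul w (inv w)) :=
        assocC hcC (hVC hwV) (hVC (hVsym _ hwV))
          (Or.inr (by rw [hG.mul_inv]; exact hC1))
      have e3 : mul y (inv w) = c := by
        rw [← e1, e2, hG.mul_inv, hG.mul_one]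
      have : mul y (inv w) ∈ U := LGGen.mulV hyU (hVsym _ hwV)
      rw [e3] at this
      exact hc this
    · exact Filter.mem_of_superset (hCcomp.isClosed.isOpen_compl.mem_nhds hcC)
        (Set.compl_subset_compl.2 hUC)
  have hUcomp : IsCompact U := hCcomp.of_isClosed_subset hUclosed hUC
  have h1U : one ∈ U := LGGen.base
  have hUsym : IsSymmetricSet inv U := by
    intro x
    constructor
    · exact fun h => LGGen.invStep h
    · intro h
      have h' : inv (inv x) ∈ U := LGGen.invStep h
      rwa [LG.inv_inv hG] at h'
  have hUmul : ∀ x ∈ U, ∀ y ∈ U, (x, y) ∈ dom ∧ mul x y ∈ U := fun x hx y hy =>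
    ⟨hCdom _ (hUC hx) _ (hUC hy), (hM y hy x hx).1⟩
  -- the group structure on `↥U`
  letI instOne : One ↥U := ⟨⟨one, h1U⟩⟩
  letI instMul : Mul ↥U := ⟨fun a b => ⟨mul ↑a ↑b, (hM _ b.2 _ a.2).1⟩⟩
  letI instInv : Inv ↥U := ⟨fun a => ⟨inv ↑a, LGGen.invStep a.2⟩⟩
  letI gU : Group ↥U :=
    Group.ofLeftAxioms
      (fun a b c => Subtype.ext
        (assocC (hUC a.2) (hUC b.2) (hUC c.2) (Or.inl (hUC (hM _ b.2 _ a.2).1))))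
      (fun a => Subtype.ext (hG.one_mul ↑a))
      (fun a => Subtype.ext (hG.inv_mul ↑a))
  refine ⟨U, hUcomp, hUopen, h1U, hUsym, hUmul, gU, rfl, fun a b => rfl, fun a => rfl, ?_⟩
  -- `↥U` is a topological group
  have hcmul : Continuous fun p : ↥U × ↥U => p.1 * p.2 := by
    refine Continuous.subtype_mk ?_ _
    have hco : Continuous fun p : ↥U × ↥U => ((p.1 : G), (p.2 : G)) :=
      (continuous_subtype_val.comp continuous_fst).prodMk
        (continuous_subtype_val.comp continuous_snd)
    exact hG.continuousOn_mul.comp_continuous hco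
      (fun p => hCdom _ (hUC p.1.2) _ (hUC p.2.2))
  have hcinv : Continuous fun a : ↥U => a⁻¹ :=
    Continuous.subtype_mk (hG.continuous_inv.comp continuous_subtype_val) _
  haveI : ContinuousMul ↥U := ⟨hcmul⟩
  haveI : ContinuousInv ↥U := ⟨hcinv⟩
  exact ⟨⟩
end

section
/- Let G be a local group and N a normal subgroup of G. If (a,b) ∈ Ω, then aN × bN ⊆ Ω and aN · bN = (ab)N, i.e., for all x,y ∈ N we have (ax, by) ∈ Ω and (ax)(by) ∈ (ab)N. -/
open scoped Topology

universe u v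

theorem lg_inv_inv {G : Type u} [TopologicalSpace G] {one : G} {inv : G → G}
    {dom : Set (G × G)} {mul : G → G → G} (hG : IsLocalGroup one inv dom mul)
    (a : G) : inv (inv a) = a := by
  have h := hG.assoc (inv (inv a)) (inv a) a (hG.mem_inv_left (inv a))
    (hG.mem_inv_left a)
    (Or.inl (by rw [hG.inv_mul]; exact hG.mem_one_left a))
  have h' := h.2.2
  rw [hG.inv_mul, hG.inv_mul, hG.one_mul, hG.mul_one] at h'
  exact h'.symm

/-- For a normal subgroup `N` of a local group `G` and
`(a, b) ∈ Ω`, we have `aN × bN ⊆ Ω` and `aN · bN = (ab)N`: for all `x, y ∈ N`,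
`(ax, by) ∈ Ω` and `(ax)(by) ∈ (ab)N`. -/
theorem coset_mul_coset
    {G : Type u} [TopologicalSpace G] (one : G) (inv : G → G)
    (dom : Set (G × G)) (mul : G → G → G)
    (hG : IsLocalGroup one inv dom mul)
    (N : Set G) (hN : IsLGNormalSubgroup one inv dom mul N)
    (a b : G) (hab : (a, b) ∈ dom) :
    ∀ x ∈ N, ∀ y ∈ N, (mul a x, mul b y) ∈ dom ∧
      mul (mul a x) (mul b y) ∈ lCoset mul N (mul a b) := by
  obtain ⟨⟨hsym, hone, hcl⟩, hnorm⟩ := hN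
  intro x hx y hy
  -- any element multiplies with elements of N on either side
  have hGN : ∀ n ∈ N, ∀ g : G, (g, n) ∈ dom := fun n hn g => (hnorm n hn g).1.1
  have hNG : ∀ n ∈ N, ∀ g : G, (n, g) ∈ dom := fun n hn g => by
    have h := (hnorm n hn (inv g)).1.2.1
    rwa [lg_inv_inv hG g] at h
  -- b * (b⁻¹ * x) = x
  have h1 := hG.assoc b (inv b) x (hG.mem_inv_right b) (hGN x hx (inv b))
    (Or.inl (by rw [hG.mul_inv]; exact hG.mem_one_left x))
  have hbbx : mul b (mul (inv b) x) = x := by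
    rw [← h1.2.2, hG.mul_inv, hG.one_mul]
  -- z := (b⁻¹ * x) * b ∈ N
  obtain ⟨⟨hd1, hd2, hd3⟩, hzN⟩ := hnorm x hx (inv b)
  rw [lg_inv_inv hG b] at hd2 hd3 hzN
  set z := mul (mul (inv b) x) b with hz
  -- x * b = b * z
  have h2 := hG.assoc b (mul (inv b) x) b h1.2.1 hd3
    (Or.inl (by rw [hbbx]; exact hNG x hx b))
  have hxb : mul x b = mul b z := by rw [hz, ← h2.2.2, hbbx]
  -- n := z * y ∈ N and (b*z)*y = b*(z*y)
  obtain ⟨hzy, hnN⟩ := hcl z hzN y hy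
  have h3 := hG.assoc b z y (hGN z hzN b) hzy (Or.inr (hGN _ hnN b))
  -- x*(b*y) = (x*b)*y = b*(z*y)
  have h4 := hG.assoc x b y (hNG x hx b) (hGN y hy b) (Or.inl (hxb ▸ h3.1))
  have hxby : mul x (mul b y) = mul b (mul z y) := by
    rw [← h4.2.2, hxb, h3.2.2]
  -- a*(b*(z*y)) = (a*b)*(z*y)
  have h5 := hG.assoc a b (mul z y) hab (hGN _ hnN b)
    (Or.inl (hGN _ hnN (mul a b)))
  -- final association
  have h6 := hG.assoc a x (mul b y) (hGN x hx a) h4.2.1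
    (Or.inr (by rw [hxby]; exact h5.2.1))
  refine ⟨h6.1, mul z y, hnN, ?_⟩
  rw [h6.2.2, hxby, ← h5.2.2]
end

section
/- Let G be a local group and N a closed normal subgroup of G. Define G/N := {aN : a ∈ G} with the quotient topology, identity N, inversion aN ↦ a⁻¹N, domain Ω_{G/N} := {(aN,bN) : (a,b) ∈ Ω}, and product (aN,bN) ↦ (ab)N. Then G/N is a local group, the canonical map π : G → G/N, π(a) = aN, is a continuous open map, and π is a strong morphism of local groups. -/
open scoped Topology

universe u v

namespace QuotLG

open Filter Set Topology

variable {G : Type u} [TopologicalSpace G] {one : G} {inv : G → G}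
  {dom : Set (G × G)} {mul : G → G → G} {N : Set G}

/-- The coset equivalence relation: `b ∈ aN`. -/
def Rel (mul : G → G → G) (N : Set G) (a b : G) : Prop := ∃ x ∈ N, b = mul a x

/-- Bundled hypotheses. -/
structure Ctx (one : G) (inv : G → G) (dom : Set (G × G))
    (mul : G → G → G) (N : Set G) : Prop where
  hG : IsLocalGroup one inv dom mul
  hN : IsLGNormalSubgroup one inv dom mul N

namespace Ctx

variable (c : Ctx one inv dom mul N)
include c

theorem oneN : one ∈ N := c.hN.1.2.1
theorem invN {x : G} (hx : x ∈ N) : inv x ∈ N := (c.hN.1.1 x).mp hx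
theorem NN {x y : G} (hx : x ∈ N) (hy : y ∈ N) : (x, y) ∈ dom :=
  (c.hN.1.2.2 x hx y hy).1
theorem mulN {x y : G} (hx : x ∈ N) (hy : y ∈ N) : mul x y ∈ N :=
  (c.hN.1.2.2 x hx y hy).2
theorem memN_r {x : G} (hx : x ∈ N) (a : G) : (a, x) ∈ dom := (c.hN.2 x hx a).1.1

theorem inv_inv (a : G) : inv (inv a) = a := by
  have h := c.hG.assoc a (inv a) (inv (inv a)) (c.hG.mem_inv_right a)
    (c.hG.mem_inv_right (inv a))
    (Or.inl (by rw [c.hG.mul_inv]; exact c.hG.mem_one_left _))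
  have h2 := h.2.2
  rw [c.hG.mul_inv, c.hG.mul_inv, c.hG.one_mul, c.hG.mul_one] at h2
  exact h2

theorem memN_l {x : G} (hx : x ∈ N) (a : G) : (x, a) ∈ dom := by
  have := (c.hN.2 x hx (inv a)).1.2.1
  rwa [c.inv_inv] at this

theorem inv_unique {a b : G} (h : (a, b) ∈ dom) (hab : mul a b = one) :
    inv a = b := by
  have h2 := c.hG.assoc (inv a) a b (c.hG.mem_inv_left a) h
    (Or.inl (by rw [c.hG.inv_mul]; exact c.hG.mem_one_left b))
  have h3 := h2.2.2
  rw [c.hG.inv_mul, c.hG.one_mul, hab, c.hG.mul_one] at h3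
  exact h3.symm

theorem inv_one : inv one = one :=
  c.inv_unique (c.hG.mem_one_left one) (c.hG.one_mul one)

theorem cancel_left {a b : G} (h : (a, b) ∈ dom) :
    (inv a, mul a b) ∈ dom ∧ mul (inv a) (mul a b) = b := by
  have h2 := c.hG.assoc (inv a) a b (c.hG.mem_inv_left a) h
    (Or.inl (by rw [c.hG.inv_mul]; exact c.hG.mem_one_left b))
  refine ⟨h2.2.1, ?_⟩
  have h3 := h2.2.2
  rw [c.hG.inv_mul, c.hG.one_mul] at h3
  exact h3.symm

theorem cancel_right {a b : G} (h : (a, b) ∈ dom) :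
    (mul a b, inv b) ∈ dom ∧ mul (mul a b) (inv b) = a := by
  have h2 := c.hG.assoc a b (inv b) h (c.hG.mem_inv_right b)
    (Or.inr (by rw [c.hG.mul_inv]; exact c.hG.mem_one_right a))
  refine ⟨h2.1, ?_⟩
  have h3 := h2.2.2
  rwa [c.hG.mul_inv, c.hG.mul_one] at h3

/-- `xb = bw` for some `w ∈ N`, when `x ∈ N`. -/
theorem shift {x : G} (hx : x ∈ N) (b : G) :
    ∃ w ∈ N, (b, w) ∈ dom ∧ mul x b = mul b w := by
  have hu : (inv b, x) ∈ dom := c.memN_r hx (inv b)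
  have hcl := c.cancel_left hu
  rw [c.inv_inv] at hcl
  -- hcl : (b, mul (inv b) x) ∈ dom ∧ mul b (mul (inv b) x) = x
  have hnor := c.hN.2 x hx (inv b)
  rw [c.inv_inv] at hnor
  -- hnor : TripleDefined .. (inv b) x b ∧ mul (mul (inv b) x) b ∈ N
  have hub : (mul (inv b) x, b) ∈ dom := hnor.1.2.2
  have h := c.hG.assoc b (mul (inv b) x) b hcl.1 hub
    (Or.inl (by rw [hcl.2]; exact c.memN_l hx b))
  refine ⟨mul (mul (inv b) x) b, hnor.2, h.2.1, ?_⟩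
  have h3 := h.2.2
  rwa [hcl.2] at h3

/-- `bx = wb` for some `w ∈ N`, when `x ∈ N`. -/
theorem shift' {x : G} (hx : x ∈ N) (b : G) :
    ∃ w ∈ N, (w, b) ∈ dom ∧ mul b x = mul w b := by
  have htri := (c.hN.2 x hx b).1
  have hwN := (c.hN.2 x hx b).2
  have h := c.hG.assoc (mul b x) (inv b) b htri.2.2 (c.hG.mem_inv_left b)
    (Or.inr (by rw [c.hG.inv_mul]; exact c.hG.mem_one_right (mul b x)))
  refine ⟨mul (mul b x) (inv b), hwN, h.1, ?_⟩
  have h3 := h.2.2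
  rw [c.hG.inv_mul, c.hG.mul_one] at h3
  exact h3.symm

theorem rel_refl (a : G) : Rel mul N a a := ⟨one, c.oneN, (c.hG.mul_one a).symm⟩

theorem rel_symm {a b : G} (h : Rel mul N a b) : Rel mul N b a := by
  obtain ⟨x, hx, rfl⟩ := h
  exact ⟨inv x, c.invN hx, (c.cancel_right (c.memN_r hx a)).2.symm⟩

theorem rel_trans {a b d : G} (h1 : Rel mul N a b) (h2 : Rel mul N b d) :
    Rel mul N a d := by
  obtain ⟨x, hx, rfl⟩ := h1
  obtain ⟨y, hy, rfl⟩ := h2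
  have h := c.hG.assoc a x y (c.memN_r hx a) (c.NN hx hy)
    (Or.inl (c.memN_r hy (mul a x)))
  exact ⟨mul x y, c.mulN hx hy, h.2.2⟩

theorem rel_left_iff {a b : G} : Rel mul N a b ↔ ∃ x ∈ N, b = mul x a := by
  constructor
  · rintro ⟨x, hx, rfl⟩
    obtain ⟨w, hw, -, hw2⟩ := c.shift' hx a
    exact ⟨w, hw, hw2⟩
  · rintro ⟨x, hx, rfl⟩
    obtain ⟨w, hw, -, hw2⟩ := c.shift hx a
    exact ⟨w, hw, hw2⟩

theorem rel_inv {a b : G} (h : Rel mul N a b) : Rel mul N (inv a) (inv b) := by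
  obtain ⟨x, hx, rfl⟩ := h
  have h1 := c.cancel_right (c.memN_r hx a)
  have h2 := c.hG.assoc (mul a x) (inv x) (inv a) h1.1
    (c.memN_l (c.invN hx) (inv a))
    (Or.inl (by rw [h1.2]; exact c.hG.mem_inv_right a))
  have h3 := h2.2.2
  rw [h1.2, c.hG.mul_inv] at h3
  have hinv : inv (mul a x) = mul (inv x) (inv a) := c.inv_unique h2.2.1 h3.symm
  obtain ⟨w, hw, -, hw2⟩ := c.shift (c.invN hx) (inv a)
  exact ⟨w, hw, by rw [hinv, hw2]⟩

/-- `dom` is saturated under the coset relation. -/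
theorem dom_sat {a b a' b' : G} (hab : (a, b) ∈ dom) (ha : Rel mul N a a')
    (hb : Rel mul N b b') : (a', b') ∈ dom := by
  obtain ⟨x, hx, rfl⟩ := ha
  obtain ⟨y, hy, rfl⟩ := hb
  obtain ⟨w, hw, hbw, hxb⟩ := c.shift hx b
  have s1 := c.hG.assoc a b w hab hbw (Or.inl (c.memN_r hw (mul a b)))
  -- s1.2.1 : (a, mul b w) ∈ dom
  have s2 := c.hG.assoc a x b (c.memN_r hx a) (c.memN_l hx b)
    (Or.inr (by rw [hxb]; exact s1.2.1))
  -- s2.1 : (mul a x, b) ∈ dom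
  have s3 := c.hG.assoc (mul a x) b y s2.1 (c.memN_r hy b)
    (Or.inl (c.memN_r hy (mul (mul a x) b)))
  exact s3.2.1

/-- Well-definedness of the quotient product. -/
theorem rel_mul {a b a' b' : G} (hab : (a, b) ∈ dom) (ha : Rel mul N a a')
    (hb : Rel mul N b b') : Rel mul N (mul a b) (mul a' b') := by
  have hab' : (a', b') ∈ dom := c.dom_sat hab ha hb
  obtain ⟨x, hx, rfl⟩ := ha
  obtain ⟨y, hy, rfl⟩ := hb
  have s1 := c.hG.assoc a x (mul b y) (c.memN_r hx a) (c.memN_l hx (mul b y))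
    (Or.inl hab')
  -- s1.2.1 : (a, mul x (mul b y)) ∈ dom ; s1.2.2 : mul (mul a x) (mul b y) = mul a (mul x (mul b y))
  have s2 := c.hG.assoc x b y (c.memN_l hx b) (c.memN_r hy b)
    (Or.inr (c.memN_l hx (mul b y)))
  -- s2.1 : (mul x b, y) ∈ dom ; s2.2.2 : mul (mul x b) y = mul x (mul b y)
  obtain ⟨w, hw, hbw, hxb⟩ := c.shift hx b
  have s4 := c.hG.assoc b w y hbw (c.NN hw hy) (Or.inl (by rw [← hxb]; exact s2.1))
  -- s4.2.2 : mul (mul b w) y = mul b (mul w y)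
  have key : mul (mul a x) (mul b y) = mul a (mul b (mul w y)) := by
    rw [s1.2.2, ← s2.2.2, hxb, s4.2.2]
  have hadom : (a, mul b (mul w y)) ∈ dom := by
    have := s1.2.1
    rwa [← s2.2.2, hxb, s4.2.2] at this
  have s6 := c.hG.assoc a b (mul w y) hab (c.memN_r (c.mulN hw hy) b)
    (Or.inr hadom)
  exact ⟨mul w y, c.mulN hw hy, by rw [key, s6.2.2]⟩

end Ctx

end QuotLG

set_option linter.unusedSectionVars false

namespace QuotLG

variable {G : Type u} [TopologicalSpace G] {one : G} {inv : G → G}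
  {dom : Set (G × G)} {mul : G → G → G} {N : Set G}

open Filter Set Topology

theorem mem_lCoset {a b : G} : b ∈ lCoset mul N a ↔ Rel mul N a b := Iff.rfl

namespace Ctx

variable (c : Ctx one inv dom mul N)
include c

theorem lCoset_eq_iff {a b : G} :
    lCoset mul N a = lCoset mul N b ↔ Rel mul N a b := by
  constructor
  · intro h
    have hb : b ∈ lCoset mul N b := c.rel_refl b
    rw [← h] at hb
    exact hb
  · intro h
    ext y
    simp only [mem_lCoset]
    exact ⟨fun hy => c.rel_trans (c.rel_symm h) hy, fun hy => c.rel_trans h hy⟩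

theorem pi_eq {a b : G} :
    cosetMap mul N a = cosetMap mul N b ↔ Rel mul N a b := by
  rw [cosetMap, cosetMap]
  exact ⟨fun h => c.lCoset_eq_iff.mp (congrArg Subtype.val h),
    fun h => Subtype.ext (c.lCoset_eq_iff.mpr h)⟩

end Ctx

/-- A choice of representative for each coset. -/
noncomputable def rep (X : Cosets mul N) : G := X.2.choose

theorem pi_rep (X : Cosets mul N) : cosetMap mul N (rep X) = X :=
  Subtype.ext (X.2.choose_spec).symm

/-- The quotient inversion. -/
noncomputable def qInv (inv : G → G) (mul : G → G → G) (N : Set G) :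
    Cosets mul N → Cosets mul N := fun X => cosetMap mul N (inv (rep X))

/-- The quotient multiplication. -/
noncomputable def qMul (mul : G → G → G) (N : Set G) :
    Cosets mul N → Cosets mul N → Cosets mul N := fun X Y =>
  cosetMap mul N (mul (rep X) (rep Y))

namespace Ctx

variable (c : Ctx one inv dom mul N)
include c

theorem rel_rep (a : G) : Rel mul N a (rep (cosetMap mul N a)) :=
  c.pi_eq.mp (pi_rep (cosetMap mul N a)).symm

theorem qinv_pi (a : G) : qInv inv mul N (cosetMap mul N a) = cosetMap mul N (inv a) :=
  c.pi_eq.mpr (c.rel_symm (c.rel_inv (c.rel_rep a)))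

theorem qmul_pi {a b : G} (hab : (a, b) ∈ dom) :
    qMul mul N (cosetMap mul N a) (cosetMap mul N b) = cosetMap mul N (mul a b) :=
  c.pi_eq.mpr (c.rel_symm (c.rel_mul hab (c.rel_rep a) (c.rel_rep b)))

theorem rep_dom {X Y : Cosets mul N} (h : (X, Y) ∈ cosetDom dom mul N) :
    (rep X, rep Y) ∈ dom := by
  obtain ⟨a, b, hab, hXY⟩ := h
  have hX : X = cosetMap mul N a := congrArg Prod.fst hXY
  have hY : Y = cosetMap mul N b := congrArg Prod.snd hXY
  refine c.dom_sat hab ?_ ?_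
  · rw [hX]; exact c.rel_rep a
  · rw [hY]; exact c.rel_rep b

/-- Continuity of a right translation with everywhere-defined product. -/
theorem cont_right {y : G} (h : ∀ v : G, (v, y) ∈ dom) :
    Continuous fun v => mul v y :=
  c.hG.continuousOn_mul.comp_continuous (continuous_id.prodMk continuous_const) h

theorem pi_continuous :
    @Continuous G (Cosets mul N) _ (cosetTop mul N) (cosetMap mul N) := by
  exact continuous_coinduced_rng

theorem saturation (U : Set G) :
    cosetMap mul N ⁻¹' (cosetMap mul N '' U) =
      ⋃ x ∈ N, (fun v => mul v (inv x)) ⁻¹' U := by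
  ext v
  simp only [Set.mem_preimage, Set.mem_image, Set.mem_iUnion]
  constructor
  · rintro ⟨u, hu, huv⟩
    obtain ⟨x, hx, hvx⟩ := c.pi_eq.mp huv
    refine ⟨x, hx, ?_⟩
    have := (c.cancel_right (c.memN_r hx u)).2
    rw [← hvx] at this
    rwa [this]
  · rintro ⟨x, hx, hu⟩
    refine ⟨mul v (inv x), hu, ?_⟩
    refine c.pi_eq.mpr ⟨x, hx, ?_⟩
    have h1 := c.cancel_right (c.memN_r (c.invN hx) v)
    rw [c.inv_inv] at h1
    exact h1.2.symm

theorem pi_isOpenMap :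
    @IsOpenMap G (Cosets mul N) _ (cosetTop mul N) (cosetMap mul N) := by
  intro U hU
  have key : IsOpen (cosetMap mul N ⁻¹' (cosetMap mul N '' U)) := by
    rw [c.saturation U]
    exact isOpen_biUnion fun x hx =>
      (c.cont_right fun v => c.memN_r (c.invN hx) v).isOpen_preimage U hU
  exact isOpen_coinduced.mpr key

theorem cosetDom_eq :
    cosetDom dom mul N =
      Prod.map (cosetMap mul N) (cosetMap mul N) '' dom := by
  ext p
  constructor
  · rintro ⟨a, b, hab, rfl⟩
    exact ⟨(a, b), hab, rfl⟩
  · rintro ⟨⟨a, b⟩, hab, rfl⟩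
    exact ⟨a, b, hab, rfl⟩

theorem cosetDom_isOpen :
    @IsOpen (Cosets mul N × Cosets mul N)
      (@instTopologicalSpaceProd _ _ (cosetTop mul N) (cosetTop mul N))
      (cosetDom dom mul N) := by
  rw [c.cosetDom_eq]
  letI : TopologicalSpace (Cosets mul N) := cosetTop mul N
  exact IsOpenMap.prodMap c.pi_isOpenMap c.pi_isOpenMap dom c.hG.isOpen_dom

end Ctx

end QuotLG

namespace QuotLG

set_option linter.unusedSectionVars false

variable {G : Type u} [TopologicalSpace G] {one : G} {inv : G → G}
  {dom : Set (G × G)} {mul : G → G → G} {N : Set G}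

open Filter Set Topology

namespace Ctx

variable (c : Ctx one inv dom mul N)
include c

theorem key1 {u v b : G} (hrel : Rel mul N u v) (h2 : (v, inv b) ∈ dom)
    (h3 : (inv (mul v (inv b)), u) ∈ dom) :
    Rel mul N (mul (inv (mul v (inv b))) u) b := by
  obtain ⟨x, hx, hv⟩ := hrel
  have h1 := c.hG.assoc v (inv b) b h2 (c.hG.mem_inv_left b)
    (Or.inr (by rw [c.hG.inv_mul]; exact c.hG.mem_one_right v))
  have hdb : mul (mul v (inv b)) b = v := by
    have := h1.2.2
    rwa [c.hG.inv_mul, c.hG.mul_one] at this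
  have h2' := c.hG.assoc (inv (mul v (inv b))) (mul v (inv b)) b
    (c.hG.mem_inv_left _) h1.1
    (Or.inl (by rw [c.hG.inv_mul]; exact c.hG.mem_one_left b))
  have hb' : b = mul (inv (mul v (inv b))) v := by
    have := h2'.2.2
    rwa [c.hG.inv_mul, c.hG.one_mul, hdb] at this
  have hidv : (inv (mul v (inv b)), v) ∈ dom := by
    have := h2'.2.1
    rwa [hdb] at this
  have h4 := c.hG.assoc (inv (mul v (inv b))) u x h3 (c.memN_r hx u)
    (Or.inr (by rw [← hv]; exact hidv))
  refine ⟨x, hx, ?_⟩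
  rw [h4.2.2, ← hv]
  exact hb'

theorem key2 {b a' x' w : G} (hw : Rel mul N w b) (hx' : x' ∈ N)
    (hb1 : b = mul a' x') : mul (inv w) a' ∈ N := by
  obtain ⟨y, hy, hby⟩ := hw
  have h1 := c.hG.assoc (inv w) w y (c.hG.mem_inv_left w) (c.memN_r hy w)
    (Or.inl (by rw [c.hG.inv_mul]; exact c.hG.mem_one_left y))
  have hiwb : (inv w, b) ∈ dom := by rw [hby]; exact h1.2.1
  have hy2 : y = mul (inv w) b := by
    have := h1.2.2
    rwa [c.hG.inv_mul, c.hG.one_mul, ← hby] at this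
  have h2 := c.cancel_right (c.memN_r hx' a')
  have ha' : mul b (inv x') = a' := by rw [hb1]; exact h2.2
  have h3 := c.hG.assoc (inv w) b (inv x') hiwb (c.memN_r (c.invN hx') b)
    (Or.inl (by rw [← hy2]; exact c.NN hy (c.invN hx')))
  have : mul y (inv x') = mul (inv w) a' := by
    rw [hy2, h3.2.2, ha']
  rw [← this]
  exact c.mulN hy (c.invN hx')

theorem rel_closed (hNc : IsClosed N) :
    IsClosed {p : G × G | Rel mul N p.1 p.2} := by
  refine isClosed_of_closure_subset ?_
  rintro ⟨a, b⟩ hab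
  haveI hne : (𝓝[{p : G × G | Rel mul N p.1 p.2}] (a, b)).NeBot :=
    mem_closure_iff_nhdsWithin_neBot.mp hab
  set l := 𝓝[{p : G × G | Rel mul N p.1 p.2}] (a, b) with hl
  have hu : Tendsto (fun p : G × G => p.1) l (𝓝 a) :=
    (continuous_fst.tendsto (a, b)).mono_left nhdsWithin_le_nhds
  have hv : Tendsto (fun p : G × G => p.2) l (𝓝 b) :=
    (continuous_snd.tendsto (a, b)).mono_left nhdsWithin_le_nhds
  have hmul_at : ∀ {q : G × G}, q ∈ dom →
      ContinuousAt (fun q : G × G => mul q.1 q.2) q :=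
    fun hq => c.hG.continuousOn_mul.continuousAt (c.hG.isOpen_dom.mem_nhds hq)
  have hvb : Tendsto (fun p : G × G => (p.2, inv b)) l (𝓝 (b, inv b)) :=
    hv.prodMk_nhds tendsto_const_nhds
  have hD : Tendsto (fun p : G × G => mul p.2 (inv b)) l (𝓝 one) := by
    have h : Tendsto (fun p : G × G => mul p.2 (inv b)) l (𝓝 (mul b (inv b))) :=
      Filter.Tendsto.comp (hmul_at (c.hG.mem_inv_right b)) hvb
    rwa [c.hG.mul_inv] at h
  have hiD : Tendsto (fun p : G × G => inv (mul p.2 (inv b))) l (𝓝 one) := by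
    have h : Tendsto (fun p : G × G => inv (mul p.2 (inv b))) l (𝓝 (inv one)) :=
      (c.hG.continuous_inv.tendsto one).comp hD
    rwa [c.inv_one] at h
  have hA : Tendsto (fun p : G × G => mul (inv (mul p.2 (inv b))) p.1) l (𝓝 a) := by
    have hpair : Tendsto (fun p : G × G => (inv (mul p.2 (inv b)), p.1)) l
        (𝓝 (one, a)) := hiD.prodMk_nhds hu
    have h : Tendsto (fun p : G × G => mul (inv (mul p.2 (inv b))) p.1) l
        (𝓝 (mul one a)) := Filter.Tendsto.comp (hmul_at (c.hG.mem_one_left a)) hpair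
    rwa [c.hG.one_mul] at h
  have e1 : ∀ᶠ p in l, Rel mul N p.1 p.2 := eventually_mem_nhdsWithin
  have e2 : ∀ᶠ p in l, (p.2, inv b) ∈ dom :=
    hvb (c.hG.isOpen_dom.mem_nhds (c.hG.mem_inv_right b))
  have e3 : ∀ᶠ p in l, (inv (mul p.2 (inv b)), p.1) ∈ dom :=
    (hiD.prodMk_nhds hu) (c.hG.isOpen_dom.mem_nhds (c.hG.mem_one_left a))
  have e4 : ∀ᶠ p in l, Rel mul N (mul (inv (mul p.2 (inv b))) p.1) b := by
    filter_upwards [e1, e2, e3] with p h1 h2 h3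
    exact c.key1 h1 h2 h3
  have e5 : ∀ᶠ p in l, (inv a, mul (inv (mul p.2 (inv b))) p.1) ∈ dom :=
    (tendsto_const_nhds.prodMk_nhds hA)
      (c.hG.isOpen_dom.mem_nhds (c.hG.mem_inv_left a))
  obtain ⟨p₀, hp₀rel, hp₀dom⟩ := (e4.and e5).exists
  obtain ⟨x', hx', hbx'⟩ := hp₀rel
  set a' := mul (inv (mul p₀.2 (inv b))) p₀.1 with ha'
  have hphi : Tendsto
      (fun p : G × G => mul (inv (mul (inv (mul p.2 (inv b))) p.1)) a') l
      (𝓝 (mul (inv a) a')) := by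
    have hiA : Tendsto (fun p : G × G => inv (mul (inv (mul p.2 (inv b))) p.1)) l
        (𝓝 (inv a)) := (c.hG.continuous_inv.tendsto a).comp hA
    have hpair : Tendsto
        (fun p : G × G => (inv (mul (inv (mul p.2 (inv b))) p.1), a')) l
        (𝓝 (inv a, a')) := hiA.prodMk_nhds tendsto_const_nhds
    exact Filter.Tendsto.comp (hmul_at hp₀dom) hpair
  have ephi : ∀ᶠ p in l,
      mul (inv (mul (inv (mul p.2 (inv b))) p.1)) a' ∈ N := by
    filter_upwards [e4] with p hp
    exact c.key2 hp hx' hbx'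
  have hz : mul (inv a) a' ∈ N := hNc.mem_of_tendsto hphi ephi
  have h6 := c.cancel_left hp₀dom
  rw [c.inv_inv] at h6
  have h7 : Rel mul N a a' := ⟨mul (inv a) a', hz, h6.2.symm⟩
  exact c.rel_trans h7 ⟨x', hx', hbx'⟩

theorem t2Q (hNc : IsClosed N) :
    @T2Space (Cosets mul N) (cosetTop mul N) := by
  letI : TopologicalSpace (Cosets mul N) := cosetTop mul N
  constructor
  intro X Y hXY
  have hrel : ¬ Rel mul N (rep X) (rep Y) := fun h =>
    hXY (by rw [← pi_rep X, ← pi_rep Y]; exact c.pi_eq.mpr h)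
  have hopen : IsOpen {p : G × G | Rel mul N p.1 p.2}ᶜ :=
    (c.rel_closed hNc).isOpen_compl
  obtain ⟨U, V, hU, hV, haU, hbV, hUV⟩ :=
    isOpen_prod_iff.mp hopen (rep X) (rep Y) hrel
  refine ⟨cosetMap mul N '' U, cosetMap mul N '' V, c.pi_isOpenMap U hU,
    c.pi_isOpenMap V hV, ⟨rep X, haU, pi_rep X⟩, ⟨rep Y, hbV, pi_rep Y⟩, ?_⟩
  rw [Set.disjoint_left]
  rintro Z ⟨u, hu, hZu⟩ ⟨v, hv, hZv⟩
  have h8 : (u, v) ∈ {p : G × G | Rel mul N p.1 p.2}ᶜ :=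
    hUV (Set.mem_prod.mpr ⟨hu, hv⟩)
  exact h8 (c.pi_eq.mp (hZu.trans hZv.symm))

end Ctx

end QuotLG

namespace QuotLG

set_option linter.unusedSectionVars false

variable {G : Type u} [TopologicalSpace G] {one : G} {inv : G → G}
  {dom : Set (G × G)} {mul : G → G → G} {N : Set G}

open Filter Set Topology

namespace Ctx

variable (c : Ctx one inv dom mul N)
include c

theorem qinv_cont :
    @Continuous (Cosets mul N) (Cosets mul N) (cosetTop mul N) (cosetTop mul N)
      (qInv inv mul N) := by
  letI : TopologicalSpace (Cosets mul N) := cosetTop mul N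
  refine continuous_coinduced_dom.mpr ?_
  have h : (qInv inv mul N) ∘ (cosetMap mul N) = (cosetMap mul N) ∘ inv :=
    funext fun a => c.qinv_pi a
  rw [h]
  exact c.pi_continuous.comp c.hG.continuous_inv

theorem qmul_contOn :
    @ContinuousOn (Cosets mul N × Cosets mul N) (Cosets mul N)
      (@instTopologicalSpaceProd _ _ (cosetTop mul N) (cosetTop mul N))
      (cosetTop mul N)
      (fun p => qMul mul N p.1 p.2) (cosetDom dom mul N) := by
  letI : TopologicalSpace (Cosets mul N) := cosetTop mul N
  refine continuousOn_of_forall_continuousAt ?_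
  rintro ⟨X, Y⟩ hXY
  obtain ⟨a, b, hab, hP⟩ := hXY
  obtain ⟨hX, hY⟩ := Prod.mk.injEq .. ▸ hP
  subst hX; subst hY
  show Tendsto (fun p : Cosets mul N × Cosets mul N => qMul mul N p.1 p.2)
    (𝓝 (cosetMap mul N a, cosetMap mul N b))
    (𝓝 (qMul mul N (cosetMap mul N a) (cosetMap mul N b)))
  rw [c.qmul_pi hab, Filter.tendsto_def]
  intro W hW
  obtain ⟨W₀, hW₀W, hW₀open, hmem⟩ := mem_nhds_iff.mp hW
  have hSopen : IsOpen (dom ∩ ((fun q : G × G =>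
      cosetMap mul N (mul q.1 q.2)) ⁻¹' W₀)) := by
    refine ContinuousOn.isOpen_inter_preimage ?_ c.hG.isOpen_dom hW₀open
    exact c.pi_continuous.comp_continuousOn c.hG.continuousOn_mul
  have himg : IsOpen (Prod.map (cosetMap mul N) (cosetMap mul N) ''
      (dom ∩ ((fun q : G × G => cosetMap mul N (mul q.1 q.2)) ⁻¹' W₀))) :=
    IsOpenMap.prodMap c.pi_isOpenMap c.pi_isOpenMap _ hSopen
  have hPin : (cosetMap mul N a, cosetMap mul N b) ∈
      Prod.map (cosetMap mul N) (cosetMap mul N) ''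
      (dom ∩ ((fun q : G × G => cosetMap mul N (mul q.1 q.2)) ⁻¹' W₀)) :=
    ⟨(a, b), ⟨hab, hmem⟩, rfl⟩
  refine Filter.mem_of_superset (himg.mem_nhds hPin) ?_
  rintro p ⟨⟨u, v⟩, ⟨huv, hq⟩, rfl⟩
  show qMul mul N (cosetMap mul N u) (cosetMap mul N v) ∈ W
  rw [c.qmul_pi huv]
  exact hW₀W hq

theorem liftA {a b b' c' p q : G} (hab : (a, b) ∈ dom) (hbc : (b', c') ∈ dom)
    (hbb' : Rel mul N b b') (hpq : (p, q) ∈ dom)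
    (hp : Rel mul N (mul a b) p) (hqc : Rel mul N c' q) :
    ∃ β γ, (a, β) ∈ dom ∧ (β, γ) ∈ dom ∧ (mul a β, γ) ∈ dom ∧
      Rel mul N b β ∧ Rel mul N c' γ := by
  obtain ⟨s, hs, hps⟩ := hp
  have hA1 := c.hG.assoc (mul a b) s q (c.memN_r hs (mul a b)) (c.memN_l hs q)
    (Or.inl (by rw [← hps]; exact hpq))
  -- hA1.2.1 : (mul a b, mul s q) ∈ dom
  have hqq' : Rel mul N q (mul s q) := c.rel_left_iff.mpr ⟨s, hs, rfl⟩
  have hcq' : Rel mul N c' (mul s q) := c.rel_trans hqc hqq'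
  obtain ⟨w, hw, hq'w⟩ := c.rel_left_iff.mp hcq'
  -- hq'w : mul s q = mul w c'
  have hA3 := c.hG.assoc (mul a b) w c' (c.memN_r hw (mul a b)) (c.memN_l hw c')
    (Or.inr (by rw [← hq'w]; exact hA1.2.1))
  -- hA3.1 : (mul (mul a b) w, c') ∈ dom
  have hA4 := c.hG.assoc a b w hab (c.memN_r hw b)
    (Or.inl (c.memN_r hw (mul a b)))
  -- hA4.2.1 : (a, mul b w) ∈ dom ; hA4.2.2 : mul (mul a b) w = mul a (mul b w)
  have hbβ : Rel mul N b (mul b w) := ⟨w, hw, rfl⟩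
  obtain ⟨u', hu', hβu'⟩ := c.rel_trans (c.rel_symm hbb') hbβ
  -- hβu' : mul b w = mul b' u'
  have hA6 := c.cancel_right (c.memN_r hu' b')
  -- hA6.2 : mul (mul b' u') (inv u') = b'
  have hA7 := c.hG.assoc (mul b w) (inv u') c'
    (c.memN_r (c.invN hu') (mul b w)) (c.memN_l (c.invN hu') c')
    (Or.inl (by rw [hβu', hA6.2]; exact hbc))
  -- hA7.2.1 : (mul b w, mul (inv u') c') ∈ dom
  have hcγ : Rel mul N c' (mul (inv u') c') :=
    c.rel_left_iff.mpr ⟨inv u', c.invN hu', rfl⟩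
  obtain ⟨w₂, hw₂, hc'w₂, heq₂⟩ := c.shift (c.invN hu') c'
  -- heq₂ : mul (inv u') c' = mul c' w₂
  have hA9 := c.hG.assoc (mul (mul a b) w) c' w₂ hA3.1 hc'w₂
    (Or.inl (c.memN_r hw₂ (mul (mul (mul a b) w) c')))
  -- hA9.2.1 : (mul (mul a b) w, mul c' w₂) ∈ dom
  refine ⟨mul b w, mul (inv u') c', hA4.2.1, hA7.2.1, ?_, hbβ, hcγ⟩
  rw [← hA4.2.2, heq₂]
  exact hA9.2.1

theorem liftB {a b b' c' p q : G} (hab : (a, b) ∈ dom) (hbc : (b', c') ∈ dom)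
    (hbb' : Rel mul N b b') (hpq : (p, q) ∈ dom)
    (hpa : Rel mul N a p) (hq : Rel mul N (mul b' c') q) :
    ∃ β, (a, β) ∈ dom ∧ (β, c') ∈ dom ∧ (a, mul β c') ∈ dom ∧
      Rel mul N b β := by
  obtain ⟨s, hs, hqs⟩ := c.rel_left_iff.mp hq
  -- hqs : q = mul s (mul b' c')
  have hB2 := c.hG.assoc p s (mul b' c') (c.memN_r hs p) (c.memN_l hs (mul b' c'))
    (Or.inr (by rw [← hqs]; exact hpq))
  -- hB2.1 : (mul p s, mul b' c') ∈ dom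
  have hap' : Rel mul N a (mul p s) := c.rel_trans hpa ⟨s, hs, rfl⟩
  obtain ⟨v, hv, hp'v⟩ := hap'
  -- hp'v : mul p s = mul a v
  have hB3 := c.hG.assoc a v (mul b' c') (c.memN_r hv a) (c.memN_l hv (mul b' c'))
    (Or.inl (by rw [← hp'v]; exact hB2.1))
  -- hB3.2.1 : (a, mul v (mul b' c')) ∈ dom
  have hB4 := c.hG.assoc v b' c' (c.memN_l hv b') hbc
    (Or.inr (c.memN_l hv (mul b' c')))
  -- hB4.1 : (mul v b', c') ∈ dom ; hB4.2.2 : mul (mul v b') c' = mul v (mul b' c')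
  have hbβ : Rel mul N b (mul v b') :=
    c.rel_trans hbb' (c.rel_left_iff.mpr ⟨v, hv, rfl⟩)
  obtain ⟨u₁, hu₁, hβu₁⟩ := id hbβ
  -- hβu₁ : mul v b' = mul b u₁
  have hB5 := c.hG.assoc a b u₁ hab (c.memN_r hu₁ b)
    (Or.inl (c.memN_r hu₁ (mul a b)))
  -- hB5.2.1 : (a, mul b u₁) ∈ dom
  refine ⟨mul v b', ?_, hB4.1, ?_, hbβ⟩
  · rw [hβu₁]; exact hB5.2.1
  · rw [hB4.2.2]; exact hB3.2.1

theorem qassoc_of_triple {X Y Z : Cosets mul N} {a β γ : G}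
    (hXa : X = cosetMap mul N a) (hYβ : Y = cosetMap mul N β)
    (hZγ : Z = cosetMap mul N γ) (haβ : (a, β) ∈ dom) (hβγ : (β, γ) ∈ dom)
    (h3 : (mul a β, γ) ∈ dom) :
    (qMul mul N X Y, Z) ∈ cosetDom dom mul N ∧
      (X, qMul mul N Y Z) ∈ cosetDom dom mul N ∧
      qMul mul N (qMul mul N X Y) Z = qMul mul N X (qMul mul N Y Z) := by
  have H := c.hG.assoc a β γ haβ hβγ (Or.inl h3)
  have hq1 : qMul mul N X Y = cosetMap mul N (mul a β) := by
    rw [hXa, hYβ]; exact c.qmul_pi haβ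
  have hq2 : qMul mul N Y Z = cosetMap mul N (mul β γ) := by
    rw [hYβ, hZγ]; exact c.qmul_pi hβγ
  refine ⟨⟨mul a β, γ, h3, by rw [hq1, hZγ]⟩,
    ⟨a, mul β γ, H.2.1, by rw [hXa, hq2]⟩, ?_⟩
  rw [hq1, hq2, hXa, hZγ, c.qmul_pi h3, c.qmul_pi H.2.1, H.2.2]

theorem qassoc (X Y Z : Cosets mul N) (hXY : (X, Y) ∈ cosetDom dom mul N)
    (hYZ : (Y, Z) ∈ cosetDom dom mul N)
    (hor : (qMul mul N X Y, Z) ∈ cosetDom dom mul N ∨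
      (X, qMul mul N Y Z) ∈ cosetDom dom mul N) :
    (qMul mul N X Y, Z) ∈ cosetDom dom mul N ∧
      (X, qMul mul N Y Z) ∈ cosetDom dom mul N ∧
      qMul mul N (qMul mul N X Y) Z = qMul mul N X (qMul mul N Y Z) := by
  obtain ⟨a, b, hab, hP1⟩ := hXY
  obtain ⟨hXa, hYb⟩ := Prod.mk.injEq .. ▸ hP1
  obtain ⟨b', c', hbc, hP2⟩ := hYZ
  obtain ⟨hYb', hZc⟩ := Prod.mk.injEq .. ▸ hP2
  have hbb' : Rel mul N b b' := c.pi_eq.mp (hYb ▸ hYb')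
  rcases hor with h | h
  · obtain ⟨p, q, hpq, hP3⟩ := h
    obtain ⟨hXYp, hZq⟩ := Prod.mk.injEq .. ▸ hP3
    have hp : Rel mul N (mul a b) p := by
      refine c.pi_eq.mp ?_
      rw [← hXYp, hXa, hYb, c.qmul_pi hab]
    have hqc : Rel mul N c' q := c.pi_eq.mp (hZc ▸ hZq)
    obtain ⟨β, γ, haβ, hβγ, h3, hbβ, hcγ⟩ := c.liftA hab hbc hbb' hpq hp hqc
    exact c.qassoc_of_triple hXa (hYb.trans (c.pi_eq.mpr hbβ))
      (hZc.trans (c.pi_eq.mpr hcγ)) haβ hβγ h3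
  · obtain ⟨p, q, hpq, hP3⟩ := h
    obtain ⟨hXp, hYZq⟩ := Prod.mk.injEq .. ▸ hP3
    have hpa : Rel mul N a p := c.pi_eq.mp (hXa ▸ hXp)
    have hq : Rel mul N (mul b' c') q := by
      refine c.pi_eq.mp ?_
      rw [← hYZq, hYb', hZc, c.qmul_pi hbc]
    obtain ⟨β, haβ, hβc, hmul2, hbβ⟩ := c.liftB hab hbc hbb' hpq hpa hq
    have h3 := (c.hG.assoc a β c' haβ hβc (Or.inr hmul2)).1
    exact c.qassoc_of_triple hXa (hYb.trans (c.pi_eq.mpr hbβ)) hZc haβ hβc h3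

end Ctx

end QuotLG

/-- For a closed normal subgroup `N` of a local group `G`, the
quotient `G/N = {aN : a ∈ G}` with the quotient topology, identity `N = 1N`,
inversion `aN ↦ a⁻¹N`, domain `Ω_{G/N} = {(aN, bN) : (a, b) ∈ Ω}` and product
`(aN, bN) ↦ (ab)N` is a local group, and the canonical map `π : G → G/N` is a
continuous open map and a strong morphism of local groups. -/
theorem quotient_isLocalGroup
    {G : Type u} [TopologicalSpace G] (one : G) (inv : G → G)
    (dom : Set (G × G)) (mul : G → G → G)
    (hG : IsLocalGroup one inv dom mul)
    (N : Set G) (hN : IsLGNormalSubgroup one inv dom mul N) (hNc : IsClosed N) :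
    ∃ (qinv : Cosets mul N → Cosets mul N)
      (qmul : Cosets mul N → Cosets mul N → Cosets mul N),
      (∀ a : G, qinv (cosetMap mul N a) = cosetMap mul N (inv a)) ∧
      (∀ a b : G, (a, b) ∈ dom →
        qmul (cosetMap mul N a) (cosetMap mul N b) = cosetMap mul N (mul a b)) ∧
      @IsLocalGroup (Cosets mul N) (cosetTop mul N) (cosetMap mul N one) qinv
        (cosetDom dom mul N) qmul ∧
      @Continuous G (Cosets mul N) _ (cosetTop mul N) (cosetMap mul N) ∧
      @IsOpenMap G (Cosets mul N) _ (cosetTop mul N) (cosetMap mul N) ∧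
      @IsLGHom G (Cosets mul N) _ (cosetTop mul N) dom mul (cosetDom dom mul N) qmul
        (cosetMap mul N) ∧
      IsStrong dom (cosetDom dom mul N) (cosetMap mul N) := by
  have c : QuotLG.Ctx one inv dom mul N := ⟨hG, hN⟩
  refine ⟨QuotLG.qInv inv mul N, QuotLG.qMul mul N, fun a => c.qinv_pi a,
    fun a b hab => c.qmul_pi hab, ?_, c.pi_continuous, c.pi_isOpenMap,
    ⟨c.pi_continuous, fun x y h => ⟨⟨x, y, h, rfl⟩, (c.qmul_pi h).symm⟩⟩,
    ?_⟩
  · letI : TopologicalSpace (Cosets mul N) := cosetTop mul N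
    refine ⟨c.t2Q hNc, c.cosetDom_isOpen, c.qinv_cont, c.qmul_contOn,
      ?_, ?_, ?_, ?_, ?_, ?_, ?_, ?_, c.qassoc⟩
    · intro X
      exact ⟨one, QuotLG.rep X, hG.mem_one_left _, by rw [QuotLG.pi_rep]⟩
    · intro X
      exact ⟨QuotLG.rep X, one, hG.mem_one_right _, by rw [QuotLG.pi_rep]⟩
    · intro X
      obtain ⟨a, rfl⟩ : ∃ a, X = cosetMap mul N a :=
        ⟨QuotLG.rep X, (QuotLG.pi_rep X).symm⟩
      rw [c.qmul_pi (hG.mem_one_left a), hG.one_mul]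
    · intro X
      obtain ⟨a, rfl⟩ : ∃ a, X = cosetMap mul N a :=
        ⟨QuotLG.rep X, (QuotLG.pi_rep X).symm⟩
      rw [c.qmul_pi (hG.mem_one_right a), hG.mul_one]
    · intro X
      obtain ⟨a, rfl⟩ : ∃ a, X = cosetMap mul N a :=
        ⟨QuotLG.rep X, (QuotLG.pi_rep X).symm⟩
      rw [c.qinv_pi a]
      exact ⟨inv a, a, hG.mem_inv_left a, rfl⟩
    · intro X
      obtain ⟨a, rfl⟩ : ∃ a, X = cosetMap mul N a :=
        ⟨QuotLG.rep X, (QuotLG.pi_rep X).symm⟩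
      rw [c.qinv_pi a]
      exact ⟨a, inv a, hG.mem_inv_right a, rfl⟩
    · intro X
      obtain ⟨a, rfl⟩ : ∃ a, X = cosetMap mul N a :=
        ⟨QuotLG.rep X, (QuotLG.pi_rep X).symm⟩
      rw [c.qinv_pi a, c.qmul_pi (hG.mem_inv_left a), hG.inv_mul]
    · intro X
      obtain ⟨a, rfl⟩ : ∃ a, X = cosetMap mul N a :=
        ⟨QuotLG.rep X, (QuotLG.pi_rep X).symm⟩
      rw [c.qinv_pi a, c.qmul_pi (hG.mem_inv_right a), hG.mul_inv]
  · intro x y h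
    obtain ⟨a, b, hab, hP⟩ := h
    obtain ⟨hxa, hyb⟩ := Prod.mk.injEq .. ▸ hP
    exact c.dom_sat hab (c.rel_symm (c.pi_eq.mp hxa)) (c.rel_symm (c.pi_eq.mp hyb))
end

section
/- Let G be a local group, H an abstract group, and ι : G → H a map such that whenever (x,y) ∈ Ω_G, ι(xy) = ι(x)ι(y) (a morphism from the discrete local group underlying G into the discrete group H). Suppose H is generated by ι(G). Then there is a unique group topology on H such that ι : G → H is continuous and open onto its image (i.e., the images ι(U) of open neighborhoods U of 1 in G form a neighborhood base at the identity of H). -/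
open scoped Topology

universe u v

/-- Lemma 3.2. Let `G` be a local group, `H` an abstract group,
and `ι : G → H` a map which is a morphism from the discrete local group underlying
`G` to `H`, whose image generates `H`. Then there is a unique group topology on `H`
for which the images `ι(U)` of the open neighborhoods `U` of `1` in `G` form a
neighborhood base at the identity of `H`. -/
theorem unique_group_topology
    {G : Type u} [TopologicalSpace G] (one : G) (inv : G → G)
    (dom : Set (G × G)) (mul : G → G → G)
    (hG : IsLocalGroup one inv dom mul)
    {H : Type v} [Group H] (ι : G → H)
    (hhom : ∀ x y : G, (x, y) ∈ dom → ι (mul x y) = ι x * ι y)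
    (hgen : Subgroup.closure (Set.range ι) = ⊤) :
    ∃! t : TopologicalSpace H, @IsTopologicalGroup H t _ ∧
      ∀ s : Set H, s ∈ @nhds H t 1 ↔ ∃ U : Set G, IsOpen U ∧ one ∈ U ∧ ι '' U ⊆ s := by
  classical
  -- basic identities
  have hone : ι one = 1 := by
    have h := hhom one one (hG.mem_one_left one)
    rw [hG.one_mul] at h
    exact (left_eq_mul.mp h)
  have hinv : ∀ x : G, ι (inv x) = (ι x)⁻¹ := by
    intro x
    have h := hhom x (inv x) (hG.mem_inv_right x)
    rw [hG.mul_inv, hone] at h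
    exact eq_inv_of_mul_eq_one_right h.symm
  have hinv1 : inv one = one := by
    have := hG.inv_mul one
    rwa [hG.mul_one] at this
  -- the conjugation property, for every x₀ ∈ H
  have hconj : ∀ x₀ : H, ∀ U : Set G, IsOpen U → one ∈ U →
      ∃ V : Set G, IsOpen V ∧ one ∈ V ∧ ∀ v ∈ V, x₀ * ι v * x₀⁻¹ ∈ ι '' U := by
    have hgenmem : ∀ x₀ : H, x₀ ∈ Submonoid.closure (Set.range ι) := by
      intro x₀
      have h1 : x₀ ∈ Subgroup.closure (Set.range ι) := by rw [hgen]; trivial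
      have h2 : x₀ ∈ (Subgroup.closure (Set.range ι)).toSubmonoid := h1
      rw [Subgroup.closure_toSubmonoid] at h2
      have hsub : Set.range ι ∪ (Set.range ι)⁻¹ ⊆ Set.range ι := by
        rintro z (hz | hz)
        · exact hz
        · obtain ⟨a, ha⟩ := hz
          exact ⟨inv a, by rw [hinv, ha, inv_inv]⟩
      exact Submonoid.closure_mono hsub h2
    intro x₀
    refine Submonoid.closure_induction (motive := fun x _ => ∀ U : Set G, IsOpen U → one ∈ U →
      ∃ V : Set G, IsOpen V ∧ one ∈ V ∧ ∀ v ∈ V, x * ι v * x⁻¹ ∈ ι '' U)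
      ?_ ?_ ?_ (hgenmem x₀)
    · -- generator case : x = ι a
      rintro x ⟨a, rfl⟩ U hU h1U
      -- the set where v ↦ (a*v)*a⁻¹ is defined
      set D₁ : Set G := (fun v => (a, v)) ⁻¹' dom with hD₁
      have hD₁open : IsOpen D₁ :=
        hG.isOpen_dom.preimage (continuous_const.prodMk continuous_id)
      have hm₁ : ContinuousOn (fun v => mul a v) D₁ := by
        have : ContinuousOn ((fun p : G × G => mul p.1 p.2) ∘ (fun v => (a, v))) D₁ :=
          hG.continuousOn_mul.comp
            (continuous_const.prodMk continuous_id).continuousOn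
            (fun v hv => hv)
        exact this
      have hg : ContinuousOn (fun v => ((mul a v : G), inv a)) D₁ :=
        hm₁.prodMk continuousOn_const
      set D : Set G := D₁ ∩ (fun v => ((mul a v : G), inv a)) ⁻¹' dom with hD
      have hDopen : IsOpen D := hg.isOpen_inter_preimage hD₁open hG.isOpen_dom
      have hf : ContinuousOn (fun v => mul (mul a v) (inv a)) D := by
        have : ContinuousOn ((fun p : G × G => mul p.1 p.2) ∘
            (fun v => ((mul a v : G), inv a))) D :=
          hG.continuousOn_mul.comp (hg.mono Set.inter_subset_left)
            (fun v hv => hv.2)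
        exact this
      set V : Set G := D ∩ (fun v => mul (mul a v) (inv a)) ⁻¹' U with hV
      have hVopen : IsOpen V := hf.isOpen_inter_preimage hDopen hU
      have h1D : one ∈ D := by
        constructor
        · exact hG.mem_one_right a
        · show ((mul a one : G), inv a) ∈ dom
          rw [hG.mul_one]; exact hG.mem_inv_right a
      have h1V : one ∈ V := by
        refine ⟨h1D, ?_⟩
        show mul (mul a one) (inv a) ∈ U
        rw [hG.mul_one, hG.mul_inv]; exact h1U
      refine ⟨V, hVopen, h1V, ?_⟩
      rintro v ⟨⟨hav, hava⟩, hfU⟩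
      refine ⟨mul (mul a v) (inv a), hfU, ?_⟩
      rw [hhom _ _ hava, hhom _ _ hav, hinv]
    · -- x = 1
      intro U hU h1U
      exact ⟨U, hU, h1U, fun v hv => by
        simpa using Set.mem_image_of_mem ι hv⟩
    · -- multiplicative case
      intro x y _ _ hx hy U hU h1U
      obtain ⟨V, hVopen, h1V, hVconj⟩ := hx U hU h1U
      obtain ⟨W, hWopen, h1W, hWconj⟩ := hy V hVopen h1V
      refine ⟨W, hWopen, h1W, fun w hw => ?_⟩
      obtain ⟨v, hv, hve⟩ := hWconj w hw
      have : x * y * ι w * (x * y)⁻¹ = x * (y * ι w * y⁻¹) * x⁻¹ := by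
        group
      rw [this, ← hve]
      exact hVconj v hv
  -- the group filter basis
  let B : GroupFilterBasis H :=
  { sets := {s | ∃ U : Set G, IsOpen U ∧ one ∈ U ∧ s = ι '' U}
    nonempty := ⟨ι '' Set.univ, Set.univ, isOpen_univ, trivial, rfl⟩
    inter_sets := by
      rintro s t ⟨U, hU, h1U, rfl⟩ ⟨V, hV, h1V, rfl⟩
      exact ⟨ι '' (U ∩ V), ⟨U ∩ V, hU.inter hV, ⟨h1U, h1V⟩, rfl⟩,
        Set.subset_inter (Set.image_mono (f := ι) Set.inter_subset_left)
          (Set.image_mono (f := ι) Set.inter_subset_right)⟩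
    one' := by
      rintro s ⟨U, hU, h1U, rfl⟩
      exact ⟨one, h1U, hone⟩
    mul' := by
      rintro s ⟨U, hU, h1U, rfl⟩
      -- continuity of mul at (1,1)
      have hdomnhds : dom ∈ 𝓝 ((one, one) : G × G) :=
        hG.isOpen_dom.mem_nhds (hG.mem_one_left one)
      have hcontAt : ContinuousAt (fun p : G × G => mul p.1 p.2) (one, one) :=
        hG.continuousOn_mul.continuousAt hdomnhds
      have hUnhds : U ∈ 𝓝 (mul one one) := by
        rw [hG.one_mul]; exact hU.mem_nhds h1U
      have hpre : (fun p : G × G => mul p.1 p.2) ⁻¹' U ∈ 𝓝 ((one, one) : G × G) :=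
        hcontAt hUnhds
      have hmem : ((fun p : G × G => mul p.1 p.2) ⁻¹' U) ∩ dom ∈ 𝓝 ((one, one) : G × G) :=
        Filter.inter_mem hpre hdomnhds
      obtain ⟨W, hWsub, hWopen, hW1⟩ := mem_nhds_iff.mp hmem
      obtain ⟨V₁, V₂, hV₁, hV₂, h1V₁, h1V₂, hVW⟩ := isOpen_prod_iff.mp hWopen one one hW1
      refine ⟨ι '' (V₁ ∩ V₂), ⟨V₁ ∩ V₂, hV₁.inter hV₂, ⟨h1V₁, h1V₂⟩, rfl⟩, ?_⟩
      rintro z hz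
      rw [Set.mem_mul] at hz
      obtain ⟨p, ⟨v, hv, rfl⟩, q, ⟨w, hw, rfl⟩, rfl⟩ := hz
      have hvw : (v, w) ∈ W := hVW ⟨hv.1, hw.2⟩
      have := hWsub hvw
      refine ⟨mul v w, this.1, ?_⟩
      exact hhom v w this.2
    inv' := by
      rintro s ⟨U, hU, h1U, rfl⟩
      refine ⟨ι '' (inv ⁻¹' U), ⟨inv ⁻¹' U, hU.preimage hG.continuous_inv,
        by simpa [Set.mem_preimage, hinv1] using h1U, rfl⟩, ?_⟩
      rintro z ⟨v, hv, rfl⟩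
      show (ι v)⁻¹ ∈ ι '' U
      exact ⟨inv v, hv, hinv v⟩
    conj' := by
      rintro x₀ s ⟨U, hU, h1U, rfl⟩
      obtain ⟨V, hVopen, h1V, hVconj⟩ := hconj x₀ U hU h1U
      refine ⟨ι '' V, ⟨V, hVopen, h1V, rfl⟩, ?_⟩
      rintro z ⟨v, hv, rfl⟩
      exact hVconj v hv }
  have hnhds : ∀ s : Set H, s ∈ @nhds H B.topology 1 ↔
      ∃ U : Set G, IsOpen U ∧ one ∈ U ∧ ι '' U ⊆ s := by
    intro s
    rw [B.nhds_one_hasBasis.mem_iff]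
    constructor
    · rintro ⟨t, ⟨U, hU, h1U, rfl⟩, hsub⟩
      exact ⟨U, hU, h1U, hsub⟩
    · rintro ⟨U, hU, h1U, hsub⟩
      exact ⟨ι '' U, ⟨U, hU, h1U, rfl⟩, hsub⟩
  refine ⟨B.topology, ⟨B.isTopologicalGroup, hnhds⟩, ?_⟩
  rintro t ⟨htg, ht⟩
  refine IsTopologicalGroup.ext htg B.isTopologicalGroup ?_
  ext s
  rw [ht s, hnhds s]
end
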